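/- arXiv:1310.8141 — 3 statements merged into one kernel-verified Lean document; each statement's English description precedes it below -/
import Mathlib

section
/- Let R be a commutative ring containing ℚ equipped with a derivation ∂ such that R has no nontrivial ∂-invariant ideals (i.e. R is ∂-simple) and R ≠ 0. Then R is an integral domain. -/
set_option linter.unusedSectionVars false
set_option maxHeartbeats 800000

section
variable {R : Type*} [CommRing R] [Algebra ℚ R]

lemma my_nat_cancel {n : ℕ} (hn : n ≠ 0) {x : R} (h : (n : R) * x = 0) : x = 0 := by
  have hc : algebraMap ℚ R ((n:ℚ)) = (n : R) := map_natCast _ n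
  have h1 : algebraMap ℚ R ((n : ℚ)⁻¹) * ((n : R) * x) = x := by
    rw [← mul_assoc, ← hc, ← map_mul, inv_mul_cancel₀ (by exact_mod_cast hn), map_one, one_mul]
  rw [← h1, h, mul_zero]

variable (D : R → R)
variable (hadd : ∀ a b : R, D (a + b) = D a + D b)
variable (hleib : ∀ a b : R, D (a * b) = D a * b + a * D b)

include hadd in
lemma myD0 : D 0 = 0 := by have := hadd 0 0; simp at this; exact this

include hadd hleib in
lemma myDpow (a : R) : ∀ n : ℕ, D (a ^ (n+1)) = ((n:R)+1) * a ^ n * D a := by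
  intro n
  induction n with
  | zero => simp
  | succ n ih =>
    have : a ^ (n+2) = a * a ^ (n+1) := by ring
    rw [this, hleib, ih]
    push_cast
    ring

include hadd hleib in
lemma my_step (a : R) (m k : ℕ) (h : a^(m+1) * (D a)^(2*k+1) = 0) :
    a^m * (D a)^(2*k+3) = 0 := by
  have h1 : D (a^(m+1) * (D a)^(2*k+1)) = 0 := by rw [h, myD0 D hadd]
  rw [hleib, myDpow D hadd hleib, myDpow D hadd hleib] at h1
  have h2 := congrArg (· * D a) h1
  simp only [zero_mul] at h2
  push_cast at h2
  have h3 : ((m:R)+1) * (a^m * (D a)^(2*k+3)) = 0 := by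
    linear_combination h2 - ((2*(k:R)+1) * D (D a)) * h
  exact my_nat_cancel (n := m+1) (by omega) (x := a^m * (D a)^(2*k+3)) (by push_cast; exact h3)

include hadd hleib in
lemma my_nilp (a : R) (hn : IsNilpotent a) : IsNilpotent (D a) := by
  obtain ⟨n, hn⟩ := hn
  rcases n with _ | n
  · simp at hn
    have : Subsingleton R := subsingleton_iff_zero_eq_one.mp hn.symm
    exact ⟨1, Subsingleton.elim _ _⟩
  · have base : a ^ n * (D a)^(2*0+1) = 0 := by
      have h1 : D (a^(n+1)) = 0 := by rw [hn, myD0 D hadd]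
      rw [myDpow D hadd hleib] at h1
      have := my_nat_cancel (n := n+1) (by omega) (x := a^n * D a) (by push_cast; linear_combination h1)
      simpa using this
    have main : ∀ j ≤ n, a ^ (n - j) * (D a)^(2*j+1) = 0 := by
      intro j
      induction j with
      | zero => intro _; simpa using base
      | succ j ih =>
        intro hj
        have hj' : j ≤ n := by omega
        have e : n - j = (n - (j+1)) + 1 := by omega
        have h1 := ih hj'
        rw [e] at h1
        have h2 := my_step D hadd hleib a (n - (j+1)) j h1
        have e2 : 2*j+3 = 2*(j+1)+1 := by omega
        rwa [e2] at h2
    have := main n le_rfl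
    simp at this
    exact ⟨2*n+1, this⟩

include hadd hleib in
lemma my_ab (a b : R) (hab : a * b = 0) : ∀ k, a^(k+1) * D^[k] b = 0 := by
  intro k
  induction k with
  | zero => simpa using hab
  | succ k ih =>
    have h1 : D (a^(k+1) * D^[k] b) = 0 := by rw [ih, myD0 D hadd]
    rw [hleib, myDpow D hadd hleib] at h1
    have h2 := congrArg (· * a) h1
    simp only [zero_mul] at h2
    rw [Function.iterate_succ_apply']
    linear_combination h2 - ((k:R)+1) * D a * ih

end

/-- A commutative ring containing ℚ with a derivation `D` such that `R` is `D`-simple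
(no nontrivial `D`-invariant ideals) and `R ≠ 0` is an integral domain. -/
theorem stmt_0 (R : Type*) [CommRing R] [Algebra ℚ R] [Nontrivial R]
    (D : R → R)
    (hadd : ∀ a b : R, D (a + b) = D a + D b)
    (hleib : ∀ a b : R, D (a * b) = D a * b + a * D b)
    (hsimple : ∀ I : Ideal R, (∀ a ∈ I, D a ∈ I) → I = ⊥ ∨ I = ⊤) :
    IsDomain R := by
  -- first: nilradical is trivial
  have hnil : nilradical R = ⊥ := by
    rcases hsimple (nilradical R) (fun a ha => my_nilp D hadd hleib a ha) with h | h
    · exact h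
    · exfalso
      have : IsNilpotent (1 : R) := by
        rw [← mem_nilradical, h]; trivial
      rcases this with ⟨n, hn⟩
      simp at hn
  have hred : ∀ x : R, IsNilpotent x → x = 0 := by
    intro x hx
    have : x ∈ nilradical R := hx
    rwa [hnil, Ideal.mem_bot] at this
  have : NoZeroDivisors R := by
    constructor
    intro a b hab
    by_contra hcon
    push_neg at hcon
    obtain ⟨ha, hb⟩ := hcon
    -- the D-ideal generated by b
    set v : ℕ → R := fun k => D^[k] b with hv
    set I : Ideal R := Ideal.span (Set.range v) with hI
    have hmem : ∀ k, v k ∈ I := fun k => Ideal.subset_span ⟨k, rfl⟩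
    have hinv : ∀ x ∈ I, D x ∈ I := by
      intro x hx
      induction hx using Submodule.span_induction with
      | mem x h =>
        obtain ⟨k, rfl⟩ := h
        have : D (v k) = v (k+1) := (Function.iterate_succ_apply' D k b).symm
        rw [this]; exact hmem (k+1)
      | zero => rw [myD0 D hadd]; exact I.zero_mem
      | add x y hx hy ihx ihy => rw [hadd]; exact I.add_mem ihx ihy
      | smul r x hx ihx =>
        rw [smul_eq_mul, hleib]
        exact I.add_mem (Ideal.mul_mem_left _ _ (by simpa using hx)) (Ideal.mul_mem_left _ _ ihx)
    rcases hsimple I hinv with h | h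
    · exact hb (by simpa [hv] using (h ▸ hmem 0 : v 0 ∈ (⊥ : Ideal R)))
    · have h1 : (1 : R) ∈ Submodule.span R (Set.range v) := by
        rw [Ideal.submodule_span_eq, ← hI, h]; trivial
      rw [Finsupp.mem_span_range_iff_exists_finsupp] at h1
      obtain ⟨c, hc⟩ := h1
      set N : ℕ := c.support.sup id + 1 with hN
      have hkey : a ^ N = 0 := by
        have := congrArg (fun x => a ^ N * x) hc
        simp only [mul_one] at this
        rw [Finsupp.sum, Finset.mul_sum] at this
        have hz : ∀ k ∈ c.support, a ^ N * (c k • v k) = 0 := by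
          intro k hk
          have hkN : k + 1 ≤ N := by
            have : k ≤ c.support.sup id := Finset.le_sup (f := id) hk
            omega
          have e : N = (N - (k+1)) + (k+1) := by omega
          rw [smul_eq_mul, e, pow_add]
          have h0 := my_ab D hadd hleib a b hab k
          calc a ^ (N - (k+1)) * a ^ (k+1) * (c k * v k)
              = c k * (a ^ (N - (k+1)) * (a ^ (k+1) * v k)) := by ring
            _ = 0 := by rw [show a ^ (k+1) * v k = 0 from h0]; ring
        rw [Finset.sum_congr rfl hz] at this
        simpa using this.symm
      exact ha (hred a ⟨N, hkey⟩)
  exact NoZeroDivisors.to_isDomain R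
end

section
/- Let k be a field of characteristic zero. The element f = Σ_{n≥1} ((−1)^{n+1}/n) x^{−n} tⁿ of k((x))((t)) does not lie in the image of the natural embedding of k((t))(x) into k((x))((t)). -/
open Finset Polynomial

lemma indep_aux {k : Type*} [Field k] [CharZero k] (d : ℕ) (w : ℕ → k)
    (h : ∀ r : ℕ, 1 ≤ r → ∑ j ∈ Finset.range (d+1), w j / ((j : k) + r) = 0) :
    ∀ j ∈ Finset.range (d+1), w j = 0 := by
  set P : k[X] := ∑ j ∈ Finset.range (d+1),
      Polynomial.C (w j) * ∏ i ∈ (Finset.range (d+1)).erase j, (X + Polynomial.C (i:k)) with hP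
  have hroot : ∀ r : ℕ, 1 ≤ r → P.eval (r : k) = 0 := by
    intro r hr
    have key : ∀ j ∈ Finset.range (d+1),
        Polynomial.eval (r:k) (Polynomial.C (w j) * ∏ i ∈ (Finset.range (d+1)).erase j, (X + Polynomial.C (i:k)))
          = (w j / ((j:k) + r)) * ∏ i ∈ Finset.range (d+1), ((r:k) + (i:k)) := by
      intro j hj
      have hjr : (j:k) + r ≠ 0 := by
        have h1 : (j:k) + r = ((j+r:ℕ):k) := by push_cast; ring
        rw [h1]
        exact Nat.cast_ne_zero.mpr (by omega)
      rw [← Finset.mul_prod_erase _ _ hj]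
      simp only [eval_mul, eval_C, eval_prod, eval_add, eval_X]
      field_simp
      ring
    rw [hP, eval_finset_sum, Finset.sum_congr rfl key, ← Finset.sum_mul, h r hr, zero_mul]
  have hP0 : P = 0 := by
    apply Polynomial.eq_zero_of_infinite_isRoot
    apply Set.Infinite.mono (s := (fun r : ℕ => ((r+1 : ℕ) : k)) '' Set.univ)
    · rintro x ⟨r, -, rfl⟩
      exact hroot (r+1) (by omega)
    · exact (Set.infinite_univ).image (fun a _ b _ hab => by
        have := Nat.cast_injective (R := k) hab; omega)
  intro j hj
  have := congrArg (Polynomial.eval (-(j:k))) hP0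
  rw [hP, eval_finset_sum] at this
  simp only [eval_mul, eval_C, eval_prod, eval_add, eval_X, eval_zero] at this
  rw [Finset.sum_eq_single j] at this
  · have hprod : ∏ i ∈ (Finset.range (d+1)).erase j, (-(j:k) + (i:k)) ≠ 0 := by
      apply Finset.prod_ne_zero_iff.mpr
      intro i hi
      have hij : i ≠ j := (Finset.mem_erase.mp hi).1
      intro hzero
      apply hij
      have : (i : k) = (j : k) := by linear_combination hzero
      exact_mod_cast this
    exact (mul_eq_zero.mp this).resolve_right hprod
  · intro b hb hbj
    apply mul_eq_zero_of_right
    apply Finset.prod_eq_zero (i := j) (Finset.mem_erase.mpr ⟨(Ne.symm hbj), hj⟩)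
    simp
  · intro h'; exact absurd hj h'

set_option synthInstance.maxHeartbeats 1000000 in
set_option maxHeartbeats 2000000 in
/-- The element `f = Σ_{n≥1} ((-1)^{n+1}/n) x^{-n} tⁿ` of `k((x))((t))` is not in the
image of the natural embedding of `k((t))(x)` into `k((x))((t))` (any ring homomorphism
sending `X` to `x` and Laurent series in `t` to themselves coefficientwise). -/
theorem stmt_12 (k : Type*) [Field k] [CharZero k]
    (φ : RatFunc (LaurentSeries k) →+* LaurentSeries (LaurentSeries k))
    (hX : φ RatFunc.X = HahnSeries.C (HahnSeries.single (1 : ℤ) (1 : k)))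
    (hC : ∀ (a : LaurentSeries k) (n : ℤ),
      (φ (RatFunc.C a)).coeff n = HahnSeries.C (a.coeff n))
    (f : LaurentSeries (LaurentSeries k))
    (hf1 : ∀ n : ℕ, 1 ≤ n →
      f.coeff (n : ℤ) = HahnSeries.single (-(n : ℤ)) (((-1) ^ (n + 1) : k) / (n : k)))
    (hf2 : ∀ n : ℤ, n < 1 → f.coeff n = 0) :
    f ∉ Set.range φ := by
  rintro ⟨rat, hrat⟩
  set K := LaurentSeries k
  set u : K := HahnSeries.single (1 : ℤ) (1 : k) with hu
  set c : ℕ → k := fun n => ((-1) ^ (n + 1) : k) / (n : k) with hc'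
  have c_ne : ∀ n : ℕ, 1 ≤ n → c n ≠ 0 := by
    intro n hn
    apply div_ne_zero (pow_ne_zero _ (by norm_num : (-1:k) ≠ 0)) (Nat.cast_ne_zero.mpr (by omega))
  -- coefficients of sums
  have hsum : ∀ {ι : Type} (s : Finset ι) (F : ι → LaurentSeries K) (n : ℤ),
      (∑ j ∈ s, F j).coeff n = ∑ j ∈ s, (F j).coeff n := by
    intro ι s F n
    exact map_sum (HahnSeries.coeff.addMonoidHom n) F s
  have hsum2 : ∀ {ι : Type} (s : Finset ι) (F : ι → K) (n : ℤ),
      (∑ j ∈ s, F j).coeff n = ∑ j ∈ s, (F j).coeff n := by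
    intro ι s F n
    exact map_sum (HahnSeries.coeff.addMonoidHom n) F s
  have hupow : ∀ j : ℕ, u ^ j = HahnSeries.single (j : ℤ) (1 : k) := by
    intro j
    rw [hu, HahnSeries.single_pow, one_pow, nsmul_eq_mul, mul_one]
  -- the image of a polynomial under φ
  have polyφ : ∀ P : Polynomial K, φ (algebraMap (Polynomial K) (RatFunc K) P)
      = ∑ j ∈ P.support, φ (RatFunc.C (P.coeff j)) * HahnSeries.C (u ^ j) := by
    intro P
    conv_lhs => rw [P.as_sum_support_C_mul_X_pow]
    rw [map_sum, map_sum]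
    refine Finset.sum_congr rfl fun j _ => ?_
    rw [map_mul, map_pow, RatFunc.algebraMap_C, RatFunc.algebraMap_X, map_mul, map_pow, hX,
      ← map_pow]
  -- coefficient of (u^j * f.coeff n) at -r
  have hgc : ∀ (j r : ℕ), 1 ≤ r → ∀ n : ℤ,
      (u ^ j * f.coeff n).coeff (-(r:ℤ)) = if n = (j:ℤ) + r then c (j + r) else 0 := by
    intro j r hr n
    by_cases hn : n < 1
    · rw [hf2 n hn, mul_zero, HahnSeries.coeff_zero, if_neg (by omega)]
    · push_neg at hn
      obtain ⟨m, rfl⟩ : ∃ m : ℕ, n = (m : ℤ) := ⟨n.toNat, (Int.toNat_of_nonneg (by omega)).symm⟩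
      rw [hf1 m (by exact_mod_cast hn), hupow, HahnSeries.single_mul_single, one_mul,
        HahnSeries.coeff_single]
      by_cases hm : (m : ℤ) = (j : ℤ) + r
      · have h2 : m = j + r := by omega
        rw [if_pos (by omega), if_pos hm, h2]
      · rw [if_neg (by omega), if_neg hm]
  have hgne : ∀ (j r : ℕ), 1 ≤ r →
      (HahnSeries.C (u ^ j) * f).coeff ((j:ℤ) + r) ≠ 0 := by
    intro j r hr h0
    have h1 : (HahnSeries.C (u ^ j) * f).coeff ((j:ℤ) + r) = u ^ j * f.coeff ((j:ℤ) + r) :=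
      HahnSeries.coeff_single_zero_mul
    rw [h0] at h1
    have h2 := hgc j r hr ((j:ℤ) + r)
    rw [← h1, HahnSeries.coeff_zero, if_pos rfl] at h2
    exact c_ne (j + r) (by omega) h2.symm
  -- key computation
  have key : ∀ (a : K) (j r : ℕ), 1 ≤ r → ∀ m : ℤ,
      ((φ (RatFunc.C a) * (HahnSeries.C (u ^ j) * f)).coeff m).coeff (-(r:ℤ))
        = a.coeff (m - j - r) * c (j + r) := by
    intro a j r hr m
    rw [HahnSeries.coeff_mul, hsum2]
    have hterm : ∀ ij : ℤ × ℤ,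
        ((φ (RatFunc.C a)).coeff ij.1 * (HahnSeries.C (u ^ j) * f).coeff ij.2).coeff (-(r:ℤ))
          = a.coeff ij.1 * (if ij.2 = (j:ℤ) + r then c (j + r) else 0) := by
      intro ij
      rw [hC, HahnSeries.C_apply, HahnSeries.coeff_single_zero_mul,
        HahnSeries.C_apply, HahnSeries.coeff_single_zero_mul, hgc j r hr]
    rw [Finset.sum_congr rfl fun ij _ => hterm ij]
    rw [Finset.sum_eq_single ((m - j - r : ℤ), ((j:ℤ) + r))]
    · rw [if_pos rfl]
    · rintro ⟨b1, b2⟩ hb hbne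
      rw [Finset.mem_addAntidiagonal] at hb
      by_cases h2 : b2 = (j:ℤ) + r
      · exfalso; apply hbne
        have : b1 = m - j - r := by have := hb.2.2; omega
        simp [this, h2]
      · rw [if_neg h2, mul_zero]
    · intro hnotmem
      rw [if_pos rfl]
      have hmem2 : ((j:ℤ) + r) ∈ (HahnSeries.C (u ^ j) * f).support := hgne j r hr
      have : a.coeff (m - j - r) = 0 := by
        by_contra ha
        apply hnotmem
        rw [Finset.mem_addAntidiagonal]
        refine ⟨?_, hmem2, by ring⟩
        rw [HahnSeries.mem_support, hC]
        intro h0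
        exact ha (by
          have := congrArg (fun z : K => z.coeff 0) h0
          simpa [HahnSeries.C_apply] using this)
      rw [this, zero_mul]
  -- negative x-coefficients of polynomial images vanish
  have pneg : ∀ (P : Polynomial K) (m : ℤ) (r : ℕ), 1 ≤ r →
      ((φ (algebraMap (Polynomial K) (RatFunc K) P)).coeff m).coeff (-(r:ℤ)) = 0 := by
    intro P m r hr
    rw [polyφ, hsum, hsum2]
    apply Finset.sum_eq_zero
    intro j hj
    rw [HahnSeries.C_apply (u ^ j), HahnSeries.coeff_mul_single_zero, hC, HahnSeries.C_apply,
      hupow, HahnSeries.single_mul_single, HahnSeries.coeff_single_of_ne (by omega)]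
  -- the fundamental equation
  set q : Polynomial K := rat.denom with hqdef
  have hd0 : (algebraMap (Polynomial K) (RatFunc K)) q ≠ 0 :=
    RatFunc.algebraMap_ne_zero (RatFunc.denom_ne_zero rat)
  have heq : φ (algebraMap (Polynomial K) (RatFunc K) rat.num)
      = φ (algebraMap (Polynomial K) (RatFunc K) q) * f := by
    have h := RatFunc.num_div_denom rat
    have h2 := (div_eq_iff hd0).mp h
    rw [h2, map_mul, hrat]
    exact mul_comm f _
  have Hmain : ∀ (m : ℤ) (r : ℕ), 1 ≤ r →
      ∑ j ∈ q.support, (q.coeff j).coeff (m - j - r) * c (j + r) = 0 := by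
    intro m r hr
    have e1 : φ (algebraMap (Polynomial K) (RatFunc K) q) * f
        = ∑ j ∈ q.support, φ (RatFunc.C (q.coeff j)) * (HahnSeries.C (u ^ j) * f) := by
      rw [polyφ,
        Finset.sum_mul q.support (fun j => φ (RatFunc.C (q.coeff j)) * HahnSeries.C (u ^ j)) f]
      exact Finset.sum_congr rfl fun j _ => mul_assoc (G := LaurentSeries (LaurentSeries k)) _ _ _
    have h0 : ((φ (algebraMap (Polynomial K) (RatFunc K) q) * f).coeff m).coeff (-(r:ℤ)) = 0 := by
      rw [← heq]; exact pneg rat.num m r hr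
    rw [e1, hsum, hsum2] at h0
    rw [← h0]
    exact Finset.sum_congr rfl fun j hj => (key (q.coeff j) j r hr m).symm
  set d := q.natDegree with hddef
  have Hrange : ∀ (m : ℤ) (r : ℕ), 1 ≤ r →
      ∑ j ∈ Finset.range (d+1), (q.coeff j).coeff (m - j - r) * c (j + r) = 0 := by
    intro m r hr
    rw [← Hmain m r hr]
    refine (Finset.sum_subset q.supp_subset_range_natDegree_succ fun j _ hj => ?_).symm
    rw [Polynomial.notMem_support_iff.mp hj, HahnSeries.coeff_zero, zero_mul]
  have hqd : ∀ N : ℤ, (q.coeff d).coeff (N - d) = 0 := by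
    intro N
    have hw := indep_aux d (fun j => (q.coeff j).coeff (N - j) * (-1:k)^j) ?_ d
      (Finset.self_mem_range_succ d)
    · have hpow : ((-1:k))^d ≠ 0 := pow_ne_zero _ (by norm_num)
      exact (mul_eq_zero.mp hw).resolve_right hpow
    · intro r hr
      have h1 : ∑ j ∈ Finset.range (d+1), (q.coeff j).coeff (N - j) * c (j+r) = 0 := by
        rw [← Hrange (N + r) r hr]
        refine Finset.sum_congr rfl fun j _ => ?_
        rw [show N + (r:ℤ) - j - r = N - j by ring]
      have hper : ∀ j ∈ Finset.range (d+1),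
          (q.coeff j).coeff (N - j) * (-1:k)^j / ((j:k) + r)
            = (-1:k)^(r+1) * ((q.coeff j).coeff (N - j) * c (j+r)) := by
        intro j _
        have hsign : ((-1:k))^(r+1) * (-1)^(j+r+1) = (-1)^j := by
          rw [← pow_add, show r + 1 + (j + r + 1) = j + 2*(r+1) by ring, pow_add, pow_mul]
          norm_num
        have hcval : c (j + r) = (-1:k)^(j+r+1) / ((j:k) + r) := by
          rw [hc']
          push_cast
          ring
        rw [hcval, ← hsign]
        ring
      rw [Finset.sum_congr rfl hper, ← Finset.mul_sum, h1, mul_zero]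
  have hq0 : q.coeff d = 0 := by
    ext n
    have := hqd (n + d)
    rwa [show (n : ℤ) + d - d = n by ring] at this
  have hmonic : q.coeff d = 1 := (RatFunc.monic_denom rat).coeff_natDegree
  rw [hq0] at hmonic
  exact one_ne_zero hmonic.symm
end

section
/- Let k be a field and n ≥ 1. Every invertible element u of k((x))((t)) can be factored as u = z⁻¹ · y where z is a nonzero element of the image of Frac(k[[x]][[t]]) in k((x))((t)) and y is a nonzero element of the image of Frac(k[x⁻¹][[t]]) in k((x))((t)). -/
/-- The natural embedding of `k[[x]][[t]]` into `k((x))((t))`. -/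
noncomputable def stmt18Phi1 (k : Type*) [Field k] :
    PowerSeries (PowerSeries k) →+* LaurentSeries (LaurentSeries k) :=
  (HahnSeries.ofPowerSeries ℤ (LaurentSeries k)).comp
    (PowerSeries.map (HahnSeries.ofPowerSeries ℤ k))

/-- The natural embedding of `k[x⁻¹][[t]]` into `k((x))((t))`, sending the polynomial
variable to `x⁻¹`. -/
noncomputable def stmt18Phi0 (k : Type*) [Field k] :
    PowerSeries (Polynomial k) →+* LaurentSeries (LaurentSeries k) :=
  (HahnSeries.ofPowerSeries ℤ (LaurentSeries k)).comp
    (PowerSeries.map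
      ((Polynomial.aeval (HahnSeries.single (-1 : ℤ) (1 : k) : LaurentSeries k)).toRingHom))

noncomputable section Stmt18Aux

namespace Stmt18

variable {k : Type*} [Field k]

/-- the embedding k[[x]] → k((x)) -/
abbrev iota : PowerSeries k →+* LaurentSeries k := HahnSeries.ofPowerSeries ℤ k

/-- the embedding k[x⁻¹] → k((x)) -/
abbrev piMap : Polynomial k →+* LaurentSeries k :=
  (Polynomial.aeval (HahnSeries.single (-1 : ℤ) (1 : k) : LaurentSeries k)).toRingHom

lemma iota_coeff (f : PowerSeries k) (n : ℕ) :
    (iota f).coeff (n : ℤ) = PowerSeries.coeff n f :=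
  HahnSeries.ofPowerSeries_apply_coeff f n

lemma iota_coeff_neg (f : PowerSeries k) (j : ℤ) (hj : j < 0) :
    (iota f).coeff j = 0 := by
  rw [show ((iota f : LaurentSeries k)) = ((f : PowerSeries k) : LaurentSeries k) from rfl,
    PowerSeries.coeff_coe, if_pos hj]

lemma piMap_coeff (p : Polynomial k) (j : ℤ) :
    (piMap p).coeff j = if j ≤ 0 then p.coeff (-j).toNat else 0 := by
  induction p using Polynomial.induction_on' with
  | add p q hp hq =>
    simp only [map_add, HahnSeries.coeff_add, hp, hq, Polynomial.coeff_add]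
    split <;> simp
  | monomial m a =>
    have h1 : (piMap (Polynomial.monomial m a) : LaurentSeries k)
        = HahnSeries.single (-(m : ℤ)) a := by
      show Polynomial.aeval _ (Polynomial.monomial m a) = _
      have h2 : algebraMap k (LaurentSeries k) a = HahnSeries.single (0 : ℤ) a := by
        rw [show algebraMap k (LaurentSeries k) a
            = HahnSeries.ofPowerSeries ℤ k (PowerSeries.C a) from rfl,
          HahnSeries.ofPowerSeries_C, HahnSeries.C_apply]
      rw [Polynomial.aeval_monomial, HahnSeries.single_pow, one_pow,
        show m • (-1 : ℤ) = -(m : ℤ) by simp, h2, HahnSeries.single_mul_single,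
        zero_add, mul_one]
    rw [h1, HahnSeries.coeff_single, Polynomial.coeff_monomial]
    by_cases h : j = -(m : ℤ)
    · rw [if_pos h, if_pos (by omega), if_pos (by omega)]
    · rw [if_neg h]
      split
      · rw [if_neg (by omega)]
      · rfl


/-- the part of a Laurent series supported in degrees ≥ 1, as a power series -/
def plusPart (f : LaurentSeries k) : PowerSeries k :=
  PowerSeries.mk fun n => if n = 0 then 0 else f.coeff (n : ℤ)

lemma iota_plusPart_coeff (f : LaurentSeries k) (j : ℤ) (hj : 0 < j) :
    (iota (plusPart f)).coeff j = f.coeff j := by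
  obtain ⟨m, rfl⟩ : ∃ m : ℕ, j = (m : ℤ) := ⟨j.toNat, by omega⟩
  rw [iota_coeff, plusPart, PowerSeries.coeff_mk, if_neg (by omega)]

/-- truncation of a Laurent series to degrees ≤ 0, as a polynomial in x⁻¹ -/
def toPoly (f : LaurentSeries k) : Polynomial k :=
  ∑ j ∈ Finset.Icc f.order 0, Polynomial.C (f.coeff j) * Polynomial.X ^ (-j).toNat

lemma piMap_toPoly (f : LaurentSeries k) (hf : ∀ j : ℤ, 0 < j → f.coeff j = 0) :
    piMap (toPoly f) = f := by
  ext i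
  rw [piMap_coeff]
  by_cases hi : i ≤ 0
  · rw [if_pos hi, toPoly, Polynomial.finset_sum_coeff]
    have hterm : ∀ j ∈ Finset.Icc f.order 0,
        (Polynomial.C (f.coeff j) * Polynomial.X ^ (-j).toNat).coeff (-i).toNat
          = if j = i then f.coeff j else 0 := by
      intro j hj
      rw [Polynomial.coeff_C_mul, Polynomial.coeff_X_pow]
      simp only [Finset.mem_Icc] at hj
      by_cases h : j = i
      · rw [if_pos (by omega), if_pos h, mul_one]
      · rw [if_neg (by omega), mul_zero, if_neg h]
    rw [Finset.sum_congr rfl hterm,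
      Finset.sum_ite_eq' (Finset.Icc f.order 0) i (fun j => f.coeff j)]
    by_cases hmem : i ∈ Finset.Icc f.order 0
    · rw [if_pos hmem]
    · rw [if_neg hmem]
      symm
      apply HahnSeries.coeff_eq_zero_of_lt_order
      simp only [Finset.mem_Icc] at hmem
      omega
  · rw [if_neg hi, hf i (by omega)]

/-- coefficients of the corrector series `z` -/
def Zfun (v : PowerSeries (LaurentSeries k)) (winv : PowerSeries k) : ℕ → PowerSeries k
  | 0 => winv
  | n + 1 =>
      -(winv * plusPart (∑ j : Fin (n + 1),
        PowerSeries.coeff (j + 1) v * iota (Zfun v winv (n - j))))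
  decreasing_by exact Nat.lt_succ_of_le (Nat.sub_le n j)

lemma prod_coeff (v : PowerSeries (LaurentSeries k)) (w winv : PowerSeries k)
    (hv0 : PowerSeries.constantCoeff v = iota w)
    (hwinv : w * winv = 1) (n : ℕ) (j : ℤ) (hj : 0 < j) :
    (PowerSeries.coeff n
      (v * PowerSeries.map (iota (k := k)) (PowerSeries.mk (Zfun v winv)))).coeff j = 0 := by
  have hmapcoeff : ∀ m : ℕ, PowerSeries.coeff m
      (PowerSeries.map (iota (k := k)) (PowerSeries.mk (Zfun v winv)))
        = iota (Zfun v winv m) := by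
    intro m
    rw [PowerSeries.coeff_map, PowerSeries.coeff_mk]
  cases n with
  | zero =>
    rw [PowerSeries.coeff_zero_eq_constantCoeff, map_mul, hv0]
    rw [show PowerSeries.constantCoeff
        (PowerSeries.map (iota (k := k)) (PowerSeries.mk (Zfun v winv)))
          = iota (Zfun v winv 0) from by
      rw [← PowerSeries.coeff_zero_eq_constantCoeff_apply, hmapcoeff]]
    rw [show Zfun v winv 0 = winv from by rw [Zfun], ← map_mul, hwinv, map_one,
      HahnSeries.coeff_one, if_neg (by omega)]
  | succ N =>
    set S : LaurentSeries k := ∑ i ∈ Finset.range (N + 1),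
      PowerSeries.coeff (i + 1) v * iota (Zfun v winv (N - i)) with hS
    have hz : Zfun v winv (N + 1) = -(winv * plusPart S) := by
      rw [Zfun, hS, ← Fin.sum_univ_eq_sum_range]
    have key : PowerSeries.coeff (N + 1)
        (v * PowerSeries.map (iota (k := k)) (PowerSeries.mk (Zfun v winv)))
          = S - iota (plusPart S) := by
      rw [PowerSeries.coeff_mul, Finset.Nat.sum_antidiagonal_eq_sum_range_succ_mk,
        Finset.sum_range_succ']
      have h0 : PowerSeries.coeff 0 v *
          PowerSeries.coeff (N + 1 - 0)
            (PowerSeries.map (iota (k := k)) (PowerSeries.mk (Zfun v winv)))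
          = - iota (plusPart S) := by
        rw [hmapcoeff, PowerSeries.coeff_zero_eq_constantCoeff_apply, hv0,
          Nat.sub_zero, hz, ← map_mul,
          show w * -(winv * plusPart S) = -((w * winv) * plusPart S) by ring,
          hwinv, one_mul, map_neg]
      rw [h0]
      have hsum : ∑ i ∈ Finset.range (N + 1),
          PowerSeries.coeff (i + 1) v *
            PowerSeries.coeff (N + 1 - (i + 1))
              (PowerSeries.map (iota (k := k)) (PowerSeries.mk (Zfun v winv))) = S := by
        refine Finset.sum_congr rfl fun i hi => ?_
        rw [hmapcoeff, Nat.succ_sub_succ]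
      rw [hsum]
      ring
    rw [key, HahnSeries.coeff_sub, iota_plusPart_coeff S j hj, sub_self]

lemma main_factor (v : PowerSeries (LaurentSeries k)) (w : PowerSeries k)
    (hw : PowerSeries.constantCoeff w ≠ 0)
    (hv0 : PowerSeries.constantCoeff v = iota w) :
    ∃ (z : PowerSeries (PowerSeries k)) (y : PowerSeries (Polynomial k)),
      PowerSeries.constantCoeff z ≠ 0 ∧
      PowerSeries.map (piMap (k := k)) y = v * PowerSeries.map (iota (k := k)) z := by
  refine ⟨PowerSeries.mk (Zfun v w⁻¹), PowerSeries.mk (fun n => toPoly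
    (PowerSeries.coeff n
      (v * PowerSeries.map (iota (k := k)) (PowerSeries.mk (Zfun v w⁻¹))))), ?_, ?_⟩
  · rw [← PowerSeries.coeff_zero_eq_constantCoeff_apply, PowerSeries.coeff_mk,
      show Zfun v w⁻¹ 0 = w⁻¹ from by rw [Zfun]]
    simpa [PowerSeries.inv_eq_zero] using hw
  · ext n
    rw [PowerSeries.coeff_map, PowerSeries.coeff_mk, piMap_toPoly]
    exact prod_coeff v w w⁻¹ hv0 (PowerSeries.mul_inv_cancel w hw) n

end Stmt18

end Stmt18Aux

namespace Stmt18

variable {k : Type*} [Field k]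

lemma Phi0_X_pow (j : ℕ) :
    stmt18Phi0 k (PowerSeries.X ^ j)
      = HahnSeries.single (j : ℤ) (1 : LaurentSeries k) := by
  rw [stmt18Phi0, RingHom.comp_apply, map_pow, PowerSeries.map_X, map_pow,
    HahnSeries.ofPowerSeries_X, HahnSeries.single_pow]
  simp

lemma Phi0_C_X_pow (j : ℕ) :
    stmt18Phi0 k (PowerSeries.C (Polynomial.X ^ j))
      = HahnSeries.C (HahnSeries.single (-(j : ℤ)) (1 : k) : LaurentSeries k) := by
  rw [stmt18Phi0, RingHom.comp_apply, PowerSeries.map_C, HahnSeries.ofPowerSeries_C]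
  congr 1
  show Polynomial.aeval (HahnSeries.single (-1 : ℤ) (1 : k) : LaurentSeries k)
    (Polynomial.X ^ j) = _
  rw [map_pow, Polynomial.aeval_X, HahnSeries.single_pow]
  simp

end Stmt18

namespace Stmt18
lemma eq_div_aux {k : Type*} [Field k] (a b c : LaurentSeries (LaurentSeries k))
    (hc : c ≠ 0) (h : a * c = b) : a = b / c :=
  eq_div_of_mul_eq hc h
end Stmt18

open Stmt18

/-- Every invertible element `u` of `k((x))((t))` factors as `u = z⁻¹ * y` with `z` a
nonzero element of (the image of) `Frac(k[[x]][[t]])` and `y` a nonzero element of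
(the image of) `Frac(k[x⁻¹][[t]])`. -/
theorem stmt_18 (k : Type*) [Field k] (n : ℕ) (hn : 1 ≤ n)
    (u : LaurentSeries (LaurentSeries k)) (hu : u ≠ 0) :
    ∃ z y : LaurentSeries (LaurentSeries k), z ≠ 0 ∧ y ≠ 0 ∧
      (∃ a b : PowerSeries (PowerSeries k),
        stmt18Phi1 k b ≠ 0 ∧ z = stmt18Phi1 k a / stmt18Phi1 k b) ∧
      (∃ c d : PowerSeries (Polynomial k),
        stmt18Phi0 k d ≠ 0 ∧ y = stmt18Phi0 k c / stmt18Phi0 k d) ∧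
      u = z⁻¹ * y := by
  classical
  set Φ : PowerSeries (LaurentSeries k) →+* LaurentSeries (LaurentSeries k) :=
    HahnSeries.ofPowerSeries ℤ (LaurentSeries k) with hΦ
  set N : ℤ := u.order with hN
  set v' : PowerSeries (LaurentSeries k) := u.powerSeriesPart with hv'
  have hu_fact : u = HahnSeries.single N (1 : LaurentSeries k) * Φ v' :=
    (LaurentSeries.single_order_mul_powerSeriesPart u).symm
  set c : LaurentSeries k := PowerSeries.constantCoeff v' with hcdef
  have hc : c ≠ 0 := by
    rw [hcdef, ← PowerSeries.coeff_zero_eq_constantCoeff_apply, hv',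
      LaurentSeries.powerSeriesPart_coeff, Nat.cast_zero, add_zero]
    exact HahnSeries.coeff_order_eq_zero.not.mpr hu
  set m : ℤ := c.order with hm
  set w : PowerSeries k := c.powerSeriesPart with hwdef
  have hw : PowerSeries.constantCoeff w ≠ 0 := by
    rw [hwdef, ← PowerSeries.coeff_zero_eq_constantCoeff_apply,
      LaurentSeries.powerSeriesPart_coeff, Nat.cast_zero, add_zero]
    exact HahnSeries.coeff_order_eq_zero.not.mpr hc
  have hcw : HahnSeries.single m (1 : k) * iota w = c :=
    LaurentSeries.single_order_mul_powerSeriesPart c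
  set v : PowerSeries (LaurentSeries k) :=
    PowerSeries.C
      (HahnSeries.single (-m) (1 : k) : LaurentSeries k) * v' with hvdef
  have hv0 : PowerSeries.constantCoeff v = iota w := by
    rw [hvdef, map_mul, PowerSeries.constantCoeff_C, ← hcdef, ← hcw, ← mul_assoc,
      HahnSeries.single_mul_single, neg_add_cancel, one_mul,
      HahnSeries.single_zero_one, one_mul]
  obtain ⟨z, y, hz0, hy⟩ := main_factor v w hw hv0
  set Z1 : LaurentSeries (LaurentSeries k) := stmt18Phi1 k z with hZ1def
  set Y0 : LaurentSeries (LaurentSeries k) := stmt18Phi0 k y with hY0def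
  have hYZ : Y0 = Φ v * Z1 := by
    rw [hY0def, stmt18Phi0, RingHom.comp_apply,
      show PowerSeries.map ((Polynomial.aeval
          (HahnSeries.single (-1 : ℤ) (1 : k) : LaurentSeries k)).toRingHom) y
        = PowerSeries.map (piMap (k := k)) y from rfl, hy, map_mul]
    rfl
  have hZ1ne : Z1 ≠ 0 := by
    intro h
    apply hz0
    have h0 : Z1.coeff ((0 : ℕ) : ℤ) = 0 := by rw [h, HahnSeries.coeff_zero]
    rw [hZ1def, stmt18Phi1, RingHom.comp_apply, HahnSeries.ofPowerSeries_apply_coeff,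
      PowerSeries.coeff_map, PowerSeries.coeff_zero_eq_constantCoeff_apply] at h0
    exact HahnSeries.ofPowerSeries_injective (by rw [h0, map_zero])
  have hvne : v ≠ 0 := by
    intro h
    apply hw
    have h1 : iota (k := k) w = 0 := by rw [← hv0, h, map_zero]
    rw [HahnSeries.ofPowerSeries_injective (by rw [h1, map_zero] : iota w = iota 0)]
    exact map_zero _
  have hΦv_fact : Φ v = HahnSeries.C
      (HahnSeries.single (-m) (1 : k) : LaurentSeries k) * Φ v' := by
    rw [hvdef, map_mul, hΦ, HahnSeries.ofPowerSeries_C]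
  -- the final data
  have hone1 : (1 : LaurentSeries k) ≠ 0 := by
    intro h
    have h2 := congrArg (fun f => HahnSeries.coeff f 0) h
    simp only [HahnSeries.coeff_one, if_pos rfl, HahnSeries.coeff_zero] at h2
    exact one_ne_zero h2
  have hone : (1 : LaurentSeries (LaurentSeries k)) ≠ 0 := by
    intro h
    have h2 := congrArg (fun f => HahnSeries.coeff f 0) h
    simp only [HahnSeries.coeff_one, if_pos rfl, HahnSeries.coeff_zero] at h2
    exact hone1 h2
  refine ⟨Z1, u * Z1, hZ1ne, mul_ne_zero hu hZ1ne, ⟨z, 1, ?_, ?_⟩, ?_, ?_⟩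
  · rw [map_one]
    exact hone
  · rw [map_one, hZ1def]
    exact eq_div_aux _ _ _ hone (mul_one (M := LaurentSeries (LaurentSeries k)) _)
  · -- y as a quotient from Frac (k[x⁻¹][[t]])
    refine ⟨PowerSeries.X ^ (N.toNat) * PowerSeries.C (Polynomial.X ^ ((-m).toNat)) * y,
      PowerSeries.X ^ ((-N).toNat) * PowerSeries.C (Polynomial.X ^ (m.toNat)), ?_, ?_⟩
    · rw [map_mul, Phi0_X_pow, Phi0_C_X_pow]
      exact mul_ne_zero (HahnSeries.single_ne_zero one_ne_zero)
        (HahnSeries.C_ne_zero (HahnSeries.single_ne_zero one_ne_zero))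
    · simp only [map_mul, Phi0_X_pow, Phi0_C_X_pow, ← hY0def]
      have hdne : (HahnSeries.single (((-N).toNat : ℕ) : ℤ) (1 : LaurentSeries k)) *
          HahnSeries.C (HahnSeries.single (-((m.toNat : ℕ) : ℤ)) (1 : k) : LaurentSeries k) ≠ 0 := by
        apply mul_ne_zero
        · exact HahnSeries.single_ne_zero one_ne_zero
        · exact HahnSeries.C_ne_zero (HahnSeries.single_ne_zero one_ne_zero)
      refine eq_div_aux _ _ _ hdne ?_
      have h1 : HahnSeries.single (N : ℤ) (1 : LaurentSeries k) *
          HahnSeries.single (((-N).toNat : ℕ) : ℤ) 1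
          = HahnSeries.single ((N.toNat : ℕ) : ℤ) 1 := by
        have e : N + (((-N).toNat : ℕ) : ℤ) = ((N.toNat : ℕ) : ℤ) := by omega
        rw [HahnSeries.single_mul_single, one_mul, e]
      have h2 : (HahnSeries.C (HahnSeries.single (-(((-m).toNat : ℕ) : ℤ)) (1 : k) : LaurentSeries k) :
              LaurentSeries (LaurentSeries k)) *
            HahnSeries.C (HahnSeries.single (-m) (1 : k) : LaurentSeries k)
          = HahnSeries.C (HahnSeries.single (-((m.toNat : ℕ) : ℤ)) (1 : k) : LaurentSeries k) := by
        have e : -(((-m).toNat : ℕ) : ℤ) + -m = -((m.toNat : ℕ) : ℤ) := by omega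
        rw [← map_mul, HahnSeries.single_mul_single, one_mul, e]
      rw [hu_fact, hYZ, hΦv_fact, ← h1, ← h2]
      ring
  · have hcl := inv_mul_cancel_left₀ hZ1ne u
    rw [mul_comm u Z1, hcl]
end
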